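/- For every integer k ≥ 1, (k+1)! ≤ 2 · k^(k+3/2) / e^(k-1). -/

import Mathlib

theorem factorial_upper_bound (k : ℕ) (hk : 1 ≤ k) :
    ((k + 1).factorial : ℝ) ≤ 2 * (k : ℝ) ^ ((k : ℝ) + 3 / 2) / Real.exp ((k : ℝ) - 1) := by
  have hk0 : (0:ℝ) < k := by exact_mod_cast hk
  obtain ⟨m, rfl⟩ : ∃ m, k = m + 1 := ⟨k - 1, (Nat.succ_pred_eq_of_pos hk).symm⟩
  set k := m + 1 with hkdef
  -- stirlingSeq k ≤ stirlingSeq 1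
  have hmono : Stirling.stirlingSeq k ≤ Stirling.stirlingSeq 1 := by
    have h := Stirling.log_stirlingSeq'_antitone (Nat.zero_le m)
    simp only [Function.comp_apply, Nat.succ_eq_add_one, Nat.zero_add] at h
    have h1 := Stirling.stirlingSeq'_pos m
    have h2 := Stirling.stirlingSeq'_pos 0
    exact (Real.log_le_log_iff h1 h2).mp h
  rw [Stirling.stirlingSeq_one] at hmono
  have hfac : (k.factorial : ℝ) =
      Stirling.stirlingSeq k * (Real.sqrt (2 * k) * ((k : ℝ) / Real.exp 1) ^ k) := by
    rw [Stirling.stirlingSeq]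
    field_simp
  have hbound : (k.factorial : ℝ) ≤
      Real.exp 1 / Real.sqrt 2 * (Real.sqrt (2 * k) * ((k : ℝ) / Real.exp 1) ^ k) := by
    rw [hfac]
    have : (0:ℝ) ≤ Real.sqrt (2 * k) * ((k : ℝ) / Real.exp 1) ^ k := by positivity
    exact mul_le_mul_of_nonneg_right hmono this
  have hstep : ((k + 1).factorial : ℝ) ≤ 2 * k * (k.factorial : ℝ) := by
    rw [Nat.factorial_succ]
    push_cast
    have hm : (0:ℝ) ≤ m := Nat.cast_nonneg m
    nlinarith [(Nat.cast_nonneg k.factorial : (0:ℝ) ≤ _), mul_le_mul_of_nonneg_right (show (1:ℝ) ≤ k by exact_mod_cast hk) (Nat.cast_nonneg k.factorial : (0:ℝ) ≤ _)]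
  have key : 2 * (k:ℝ) * (Real.exp 1 / Real.sqrt 2 * (Real.sqrt (2 * k) * ((k : ℝ) / Real.exp 1) ^ k))
      = 2 * (k : ℝ) ^ ((k : ℝ) + 3 / 2) / Real.exp ((k : ℝ) - 1) := by
    have hsqrt : Real.sqrt (2 * k) = Real.sqrt 2 * Real.sqrt k := Real.sqrt_mul (by norm_num) _
    have hrpow : (k : ℝ) ^ ((k : ℝ) + 3 / 2)
        = (k : ℝ) ^ (k : ℕ) * ((k:ℝ) * Real.sqrt k) := by
      rw [Real.rpow_add hk0, Real.rpow_natCast]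
      congr 1
      rw [show (3/2 : ℝ) = 1 + 1/2 by norm_num, Real.rpow_add hk0, Real.rpow_one,
        Real.sqrt_eq_rpow]
    rw [hsqrt, hrpow, Real.exp_sub, div_pow, Real.exp_one_pow]
    have h2 : Real.sqrt 2 ≠ 0 := by positivity
    have he : Real.exp (k:ℝ) ≠ 0 := Real.exp_ne_zero _
    field_simp
  calc ((k + 1).factorial : ℝ) ≤ 2 * k * (k.factorial : ℝ) := hstep
    _ ≤ 2 * (k:ℝ) * (Real.exp 1 / Real.sqrt 2 * (Real.sqrt (2 * k) * ((k : ℝ) / Real.exp 1) ^ k)) :=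
        mul_le_mul_of_nonneg_left hbound (by positivity)
    _ = _ := key
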